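/- arXiv:2509.16008 — 6 statements merged into one kernel-verified Lean document; each statement's English description precedes it below -/
import Mathlib

section
/- Let d ≥ 1 be an integer, let s, Δ > 0 and suppose N := s·√d/Δ is a positive integer. Then for every point p ∈ ℝ^d there exists z ∈ {0,1,…,N−1}^d such that p is Δ-near in the shifted grid G_s((Δ/√d)·z); concretely, the point q with coordinates q_i = (Δ/√d)·z_i + s·(⌊(p_i − (Δ/√d)·z_i)/s⌋ + 1/2) satisfies the Euclidean bound ‖p − q‖ ≤ Δ. -/
/-- Coordinate lemma: one can shift the 1-dim grid of side `s` by a multiple `k·δ`,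
`0 ≤ k < N`, `δ = s/N`, so that `x` is within `δ` of the center of its cell. -/
lemma grid_shift_coord (N : ℕ) (hN : 0 < N) (s δ x : ℝ) (hs : 0 < s)
    (hδ : δ = s / N) :
    ∃ k : ℕ, k < N ∧ |x - (δ * k + s * ((⌊(x - δ * k) / s⌋ : ℝ) + 1/2))| ≤ δ := by
  have hNR : (0:ℝ) < N := by exact_mod_cast hN
  have hδpos : 0 < δ := by rw [hδ]; positivity
  set u := Int.fract (x / s - 1/2) with hu
  have hu0 : 0 ≤ u := Int.fract_nonneg _
  have hu1 : u < 1 := Int.fract_lt_one _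
  set k : ℕ := (⌊(N : ℝ) * u⌋).toNat with hk
  have hfl0 : 0 ≤ ⌊(N : ℝ) * u⌋ := Int.floor_nonneg.mpr (by positivity)
  have hkZ : ((k : ℕ) : ℤ) = ⌊(N : ℝ) * u⌋ := Int.toNat_of_nonneg hfl0
  have hkcast : ((k : ℕ) : ℝ) = ((⌊(N : ℝ) * u⌋ : ℤ) : ℝ) := by exact_mod_cast hkZ
  have hkle : (k : ℝ) ≤ (N : ℝ) * u := by rw [hkcast]; exact Int.floor_le _
  have hklt : (N : ℝ) * u < (k : ℝ) + 1 := by rw [hkcast]; exact Int.lt_floor_add_one _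
  have hkN : k < N := by
    have : (k : ℝ) < N := lt_of_le_of_lt hkle (by nlinarith)
    exact_mod_cast this
  refine ⟨k, hkN, ?_⟩
  have hfr : x / s - 1/2 = (⌊x / s - 1/2⌋ : ℝ) + u := (Int.floor_add_fract _).symm
  clear_value u k
  set e : ℝ := u - (k : ℝ) / N with he
  have he0 : 0 ≤ e := by
    rw [he, sub_nonneg, div_le_iff₀ hNR]
    nlinarith
  have heN : e < 1 / N := by
    rw [he, sub_lt_iff_lt_add, ← add_div, lt_div_iff₀ hNR]
    nlinarith
  clear_value e
  have hy : (x - δ * k) / s = (⌊x / s - 1/2⌋ : ℝ) + (e + 1/2) := by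
    have h1 : (x - δ * k) / s = (x / s - 1/2) + 1/2 - (k : ℝ) / N := by
      rw [hδ]; field_simp; ring
    rw [h1, he]; linarith [hfr]
  have key : x - (δ * k + s * ((⌊(x - δ * k) / s⌋ : ℝ) + 1/2))
      = s * (Int.fract ((x - δ * k)/s) - 1/2) := by
    rw [Int.fract]
    field_simp
    ring
  rw [key, hy, Int.fract_intCast_add]
  by_cases hcase : e + 1/2 < 1
  · rw [Int.fract_eq_self.mpr ⟨by linarith, hcase⟩]
    have h2 : |s * (e + 1/2 - 1/2)| = s * e := by
      rw [abs_of_nonneg (by nlinarith)]; ring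
    rw [h2, hδ, le_div_iff₀ hNR]
    have : e * N < 1 := (lt_div_iff₀ hNR).mp heN
    nlinarith
  · have hf0 : 0 ≤ Int.fract (e + 1/2) := Int.fract_nonneg _
    have hf1 : Int.fract (e + 1/2) < 1 := Int.fract_lt_one _
    have habs : |Int.fract (e + 1/2) - 1/2| ≤ 1/2 := abs_le.mpr ⟨by linarith, by linarith⟩
    have h12 : (1:ℝ)/2 < 1 / N := by
      have : (1:ℝ)/2 ≤ e := by linarith
      linarith
    rw [abs_mul, abs_of_pos hs, hδ]
    calc s * |Int.fract (e + 1/2) - 1/2| ≤ s * (1/N) :=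
          mul_le_mul_of_nonneg_left (by linarith) hs.le
      _ = s / N := by ring

/-- grid shifting lemma. For `N = s·√d/Δ` a positive integer, every point
`p ∈ ℝ^d` is `Δ`-near in one of the shifted grids `G_s((Δ/√d)·z)`, `z ∈ {0,…,N−1}^d`:
the center `q` of the cell of that grid containing `p` satisfies `‖p − q‖ ≤ Δ`. -/
theorem grid_shift (d : ℕ) (hd : 1 ≤ d) (s Δ : ℝ) (hs : 0 < s) (hΔ : 0 < Δ)
    (N : ℕ) (hN : 0 < N) (hNval : (N : ℝ) = s * Real.sqrt d / Δ)
    (p : EuclideanSpace ℝ (Fin d)) :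
    ∃ z : Fin d → ℕ, (∀ i, z i < N) ∧
      ‖p - (WithLp.equiv 2 (Fin d → ℝ)).symm (fun i =>
          (Δ / Real.sqrt d) * (z i : ℝ) +
          s * ((⌊(p i - (Δ / Real.sqrt d) * (z i : ℝ)) / s⌋ : ℝ) + 1/2))‖ ≤ Δ := by
  have hdR : (1:ℝ) ≤ d := by exact_mod_cast hd
  have hsqrt : 0 < Real.sqrt d := Real.sqrt_pos.mpr (by linarith)
  set δ : ℝ := Δ / Real.sqrt d with hδdef
  have hδpos : 0 < δ := by positivity
  have hδ : δ = s / N := by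
    rw [hδdef, hNval]
    field_simp
  choose z hzN hz using fun i => grid_shift_coord N hN s δ (p i) hs hδ
  refine ⟨z, hzN, ?_⟩
  have hnorm : ‖p - (WithLp.equiv 2 (Fin d → ℝ)).symm (fun i =>
          δ * (z i : ℝ) +
          s * ((⌊(p i - δ * (z i : ℝ)) / s⌋ : ℝ) + 1/2))‖
      ≤ Real.sqrt (d * δ^2) := by
    rw [EuclideanSpace.norm_eq]
    apply Real.sqrt_le_sqrt
    have hb : ∀ i : Fin d, ‖(p - (WithLp.equiv 2 (Fin d → ℝ)).symm (fun i =>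
          δ * (z i : ℝ) +
          s * ((⌊(p i - δ * (z i : ℝ)) / s⌋ : ℝ) + 1/2))) i‖^2 ≤ δ^2 := by
      intro i
      have hcoord : (p - (WithLp.equiv 2 (Fin d → ℝ)).symm (fun i =>
          δ * (z i : ℝ) +
          s * ((⌊(p i - δ * (z i : ℝ)) / s⌋ : ℝ) + 1/2))) i
        = p i - (δ * (z i : ℝ) + s * ((⌊(p i - δ * (z i : ℝ)) / s⌋ : ℝ) + 1/2)) := rfl
      rw [hcoord, Real.norm_eq_abs, ← sq_abs δ]
      exact pow_le_pow_left₀ (abs_nonneg _) (le_trans (hz i) (le_abs_self δ)) 2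
    calc ∑ i, ‖(p - (WithLp.equiv 2 (Fin d → ℝ)).symm (fun i =>
          δ * (z i : ℝ) +
          s * ((⌊(p i - δ * (z i : ℝ)) / s⌋ : ℝ) + 1/2))) i‖^2
        ≤ ∑ _i : Fin d, δ^2 := Finset.sum_le_sum (fun i _ => hb i)
      _ = d * δ^2 := by
          rw [Finset.sum_const, Finset.card_fin, nsmul_eq_mul]
  have hfinal : Real.sqrt (d * δ^2) = Δ := by
    rw [Real.sqrt_mul (by positivity), Real.sqrt_sq hδpos.le, hδdef]
    field_simp
  calc ‖p - (WithLp.equiv 2 (Fin d → ℝ)).symm (fun i =>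
          (Δ / Real.sqrt d) * (z i : ℝ) +
          s * ((⌊(p i - (Δ / Real.sqrt d) * (z i : ℝ)) / s⌋ : ℝ) + 1/2))‖
      = ‖p - (WithLp.equiv 2 (Fin d → ℝ)).symm (fun i =>
          δ * (z i : ℝ) +
          s * ((⌊(p i - δ * (z i : ℝ)) / s⌋ : ℝ) + 1/2))‖ := by rw [hδdef]
    _ ≤ Real.sqrt (d * δ^2) := hnorm
    _ = Δ := hfinal
end

section
/- Let μ be a probability measure on a measurable space Ω, let 0 < ε ≤ 1/4, let B_1,…,B_k (k ≥ 1) be measurable subsets of Ω with μ(B_j) ≥ 1/2 − ε for every j, and let w_1,…,w_k ≥ 0 with W = Σ_{j=1}^k w_j. Let t ≥ 1 and consider t independent samples p_1,…,p_t drawn from μ, i.e., the product measure μ^{⊗t} on Ω^t. Then the μ^{⊗t}-probability of the event that there exists an index i ∈ {1,…,t} with wd(p_i) ≥ (1/2 − 2ε)·W is at least 1 − k·exp(−t·ε²/8). -/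
open MeasureTheory

/-- the randomized game. Drawing `t` i.i.d. samples from a probability
measure `μ`, where each of the `k` weighted sets `B j` has `μ(B j) ≥ 1/2 − ε`, with
probability at least `1 − k·exp(−t·ε²/8)` some sample point has weighted depth
`wd(p_i) = Σ_{j : p_i ∈ B j} w j` at least `(1/2 − 2ε)·W`. -/
theorem random_sample_deep_point {Ω : Type*} [MeasurableSpace Ω]
    (μ : Measure Ω) [IsProbabilityMeasure μ]
    (ε : ℝ) (hε : 0 < ε) (hε' : ε ≤ 1/4)
    (k : ℕ) (hk : 1 ≤ k) (B : Fin k → Set Ω) (hB : ∀ j, MeasurableSet (B j))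
    (hμB : ∀ j, 1/2 - ε ≤ (μ (B j)).toReal)
    (w : Fin k → ℝ) (hw : ∀ j, 0 ≤ w j) (W : ℝ) (hW : W = ∑ j, w j)
    (t : ℕ) (ht : 1 ≤ t) :
    1 - (k : ℝ) * Real.exp (-(t : ℝ) * ε ^ 2 / 8) ≤
      ((Measure.pi fun _ : Fin t => μ)
        {p : Fin t → Ω | ∃ i : Fin t,
          (1/2 - 2*ε) * W ≤ ∑ j, (B j).indicator (fun _ => w j) (p i)}).toReal := by
  classical
  set f : Ω → ℝ := fun x => ∑ j, (B j).indicator (fun _ => w j) x with hfdef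
  have hfm : Measurable f := by
    apply Finset.measurable_sum
    intro j _
    exact measurable_const.indicator (hB j)
  set c : ℝ := (1/2 - 2*ε) * W with hcdef
  set G : Set Ω := {x | c ≤ f x} with hGdef
  have hGm : MeasurableSet G := measurableSet_le measurable_const hfm
  have hW0 : 0 ≤ W := hW ▸ Finset.sum_nonneg fun j _ => hw j
  have hf0 : ∀ x, 0 ≤ f x := fun x =>
    Finset.sum_nonneg fun j _ => Set.indicator_nonneg (fun _ _ => hw j) x
  have hfW : ∀ x, f x ≤ W := by
    intro x
    rw [hW]
    exact Finset.sum_le_sum fun j _ => Set.indicator_le_self' (fun _ _ => hw j) x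
  -- μ G ≥ ε
  have hq : ε ≤ (μ G).toReal := by
    rcases eq_or_lt_of_le hW0 with hW0' | hWpos
    · have : G = Set.univ := by
        ext x
        simp only [hGdef, Set.mem_setOf_eq, Set.mem_univ, iff_true]
        rw [hcdef, ← hW0']
        simpa using hf0 x
      rw [this]
      simp
      linarith
    · -- integral argument
      have hfi : Integrable f μ := by
        apply integrable_finset_sum
        intro j _
        exact (integrable_const (w j)).indicator (hB j)
      have hint : ∫ x, f x ∂μ = ∑ j, (μ (B j)).toReal * w j := by
        rw [hfdef, integral_finset_sum]
        · refine Finset.sum_congr rfl fun j _ => ?_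
          rw [integral_indicator_const _ (hB j)]
          simp [smul_eq_mul, measureReal_def]
        · intro j _
          exact (integrable_const (w j)).indicator (hB j)
      have hlb : (1/2 - ε) * W ≤ ∫ x, f x ∂μ := by
        rw [hint, hW, Finset.mul_sum]
        refine Finset.sum_le_sum fun j _ => ?_
        exact mul_le_mul_of_nonneg_right (hμB j) (hw j)
      set g : Ω → ℝ := fun x => c + G.indicator (fun _ => (1/2 + 2*ε) * W) x with hgdef
      have hgi : Integrable g μ := by
        exact (integrable_const c).add ((integrable_const _).indicator hGm)
      have hfg : ∀ x, f x ≤ g x := by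
        intro x
        by_cases hx : x ∈ G
        · have : g x = c + (1/2 + 2*ε) * W := by
            simp [hgdef, Set.indicator_of_mem hx]
          rw [this, hcdef]
          have := hfW x
          nlinarith
        · have : g x = c := by simp [hgdef, Set.indicator_of_notMem hx]
          rw [this]
          have : ¬ c ≤ f x := hx
          linarith
      have hintg : ∫ x, g x ∂μ = c + (1/2 + 2*ε) * W * (μ G).toReal := by
        rw [hgdef, integral_add (integrable_const c) ((integrable_const _).indicator hGm)]
        rw [integral_const, integral_indicator_const _ hGm]
        simp [smul_eq_mul, mul_comm, measureReal_def]
      have hmono : ∫ x, f x ∂μ ≤ ∫ x, g x ∂μ := integral_mono hfi hgi hfg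
      have hq0 : 0 ≤ (μ G).toReal := ENNReal.toReal_nonneg
      have key : (1/2 - ε) * W ≤ c + (1/2 + 2*ε) * W * (μ G).toReal := by
        rw [← hintg]; linarith
      rw [hcdef] at key
      have h6 : (1/2 + 2*ε) * (W * (μ G).toReal) ≤ 1 * (W * (μ G).toReal) :=
        mul_le_mul_of_nonneg_right (by linarith) (mul_nonneg hW0 hq0)
      have h7 : W * ε ≤ W * (μ G).toReal := by nlinarith [key, h6]
      exact (mul_le_mul_iff_right₀ hWpos).1 h7
  -- now the product measure computation
  have hq1 : (μ G).toReal ≤ 1 := by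
    have := prob_le_one (μ := μ) (s := G)
    simpa using ENNReal.toReal_mono ENNReal.one_ne_top this
  set ν := Measure.pi fun _ : Fin t => μ with hν
  set E : Set (Fin t → Ω) := {p : Fin t → Ω | ∃ i : Fin t,
      (1/2 - 2*ε) * W ≤ ∑ j, (B j).indicator (fun _ => w j) (p i)} with hEdef
  have hEeq : E = ⋃ i : Fin t, (fun p : Fin t → Ω => p i) ⁻¹' G := by
    ext p
    simp only [hEdef, Set.mem_setOf_eq, Set.mem_iUnion, Set.mem_preimage, hGdef, hcdef, hfdef]
  have hEm : MeasurableSet E := by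
    rw [hEeq]
    exact MeasurableSet.iUnion fun i => (measurable_pi_apply i) hGm
  have hEc : Eᶜ = Set.pi Set.univ (fun _ : Fin t => Gᶜ) := by
    rw [hEeq]
    ext p
    simp [Set.mem_pi]
  have hνEc : ν Eᶜ = (μ Gᶜ) ^ t := by
    rw [hEc, hν, Measure.pi_pi]
    simp
  have hνE : ν E = 1 - (μ Gᶜ) ^ t := by
    have h := prob_compl_eq_one_sub (μ := ν) hEm
    rw [← hνEc, h, ENNReal.sub_sub_cancel ENNReal.one_ne_top prob_le_one]
  have hle1 : (μ Gᶜ) ^ t ≤ 1 := pow_le_one' prob_le_one t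
  have htr : (ν E).toReal = 1 - ((μ Gᶜ).toReal) ^ t := by
    rw [hνE, ENNReal.toReal_sub_of_le hle1 ENNReal.one_ne_top]
    simp [ENNReal.toReal_pow]
  have hcompl : (μ Gᶜ).toReal = 1 - (μ G).toReal := by
    rw [prob_compl_eq_one_sub hGm, ENNReal.toReal_sub_of_le prob_le_one ENNReal.one_ne_top]
    simp
  rw [htr, hcompl]
  have h1 : (1 - (μ G).toReal) ^ t ≤ (1 - ε) ^ t := by
    apply pow_le_pow_left₀ (by linarith) (by linarith)
  have h2 : (1 - ε) ^ t ≤ Real.exp (-ε) ^ t := by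
    apply pow_le_pow_left₀ (by linarith)
    linarith [Real.add_one_le_exp (-ε)]
  have h3 : Real.exp (-ε) ^ t = Real.exp (-(t : ℝ) * ε) := by
    rw [← Real.exp_nat_mul]; ring_nf
  have ht1 : (1 : ℝ) ≤ (t : ℝ) := by exact_mod_cast ht
  have h4 : Real.exp (-(t : ℝ) * ε) ≤ Real.exp (-(t : ℝ) * ε ^ 2 / 8) := by
    apply Real.exp_le_exp.2
    nlinarith [mul_nonneg (mul_nonneg (by linarith : (0:ℝ) ≤ (t:ℝ)) hε.le)
      (by linarith : (0:ℝ) ≤ 8 - ε)]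
  have h5 : Real.exp (-(t : ℝ) * ε ^ 2 / 8) ≤ (k : ℝ) * Real.exp (-(t : ℝ) * ε ^ 2 / 8) := by
    have hk1 : (1 : ℝ) ≤ (k : ℝ) := by exact_mod_cast hk
    nlinarith [Real.exp_pos (-(t : ℝ) * ε ^ 2 / 8)]
  linarith
end

section
/- For every 0 < ε < 1/2, let B ⊆ ℝ² be the closed Euclidean disk of radius 1 centered at (0, 1+ε²), and let S ⊆ ℝ² be the circle (sphere) of radius ε centered at the origin. Then the 1-dimensional Hausdorff measure of B ∩ S is at least (1/2 − 2ε)·2πε. -/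
set_option maxHeartbeats 1000000

open MeasureTheory Metric Real Set

lemma chord_le_hausdorff {s : Set (EuclideanSpace ℝ (Fin 2))} (hs : IsPreconnected s)
    {p q : EuclideanSpace ℝ (Fin 2)} (hp : p ∈ s) (hq : q ∈ s) :
    ENNReal.ofReal (dist p q) ≤ μH[1] s := by
  rcases eq_or_ne p q with rfl | hpq
  · simp
  have hnorm : ‖p - q‖ ≠ 0 := by simp [sub_eq_zero, hpq]
  set u : EuclideanSpace ℝ (Fin 2) := ‖p - q‖⁻¹ • (p - q) with hu
  have hun : ‖u‖ = 1 := by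
    rw [hu, norm_smul, norm_inv, norm_norm, inv_mul_cancel₀ hnorm]
  set g : EuclideanSpace ℝ (Fin 2) → ℝ := fun x => inner ℝ u x with hg
  have hlip : LipschitzWith 1 g := by
    apply LipschitzWith.of_dist_le_mul
    intro x y
    rw [Real.dist_eq, hg]
    simp only
    rw [← inner_sub_right]
    calc |inner ℝ u (x - y)| ≤ ‖u‖ * ‖x - y‖ := abs_real_inner_le_norm u (x - y)
      _ = 1 * dist x y := by rw [hun, dist_eq_norm]
  have himg : μH[1] (g '' s) ≤ μH[1] s := by
    have h := hlip.hausdorffMeasure_image_le (zero_le_one) s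
    simpa using h
  have hconn : IsPreconnected (g '' s) := hs.image g hlip.continuous.continuousOn
  have hgpq : g p - g q = dist p q := by
    rw [hg]
    simp only
    rw [← inner_sub_right, hu, real_inner_smul_left, real_inner_self_eq_norm_mul_norm,
      dist_eq_norm]
    field_simp
  have hIcc : Icc (g q) (g p) ⊆ g '' s :=
    hconn.Icc_subset ⟨q, hq, rfl⟩ ⟨p, hp, rfl⟩
  calc ENNReal.ofReal (dist p q) = volume (Icc (g q) (g p)) := by
        rw [Real.volume_Icc, hgpq]
    _ = μH[1] (Icc (g q) (g p)) := by rw [MeasureTheory.hausdorffMeasure_real]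
    _ ≤ μH[1] (g '' s) := measure_mono hIcc
    _ ≤ μH[1] s := himg

lemma angle_eq_of {x y : ℝ} (hc : Real.cos x = Real.cos y) (hs : Real.sin x = Real.sin y)
    (h : |x - y| < 2 * Real.pi) : x = y := by
  obtain ⟨h1, h2⟩ := abs_lt.1 h
  have hcos : Real.cos (x - y) = 1 := by
    rw [Real.cos_sub, hc, hs]
    nlinarith [Real.sin_sq_add_cos_sq y]
  have := (Real.cos_eq_one_iff_of_lt_of_lt (by linarith) (by linarith)).1 hcos
  linarith


set_option maxHeartbeats 8000000 in
/-- in the plane, the unit disk centered at `(0, 1+ε²)` covers arc length at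
least `(1/2 − 2ε)·2πε` of the circle of radius `ε` centered at the origin (lengths
measured by the 1-dimensional Hausdorff measure). -/
theorem cap_length_lower_bound (ε : ℝ) (hε : 0 < ε) (hε' : ε < 1/2) :
    ENNReal.ofReal ((1/2 - 2*ε) * (2 * Real.pi * ε)) ≤
      μH[1] (closedBall ((WithLp.equiv 2 (Fin 2 → ℝ)).symm ![0, 1 + ε^2]) 1 ∩
              sphere (0 : EuclideanSpace ℝ (Fin 2)) ε) := by
  rcases le_or_gt (1/4 : ℝ) ε with h4 | h4
  · have h0 : (1/2 - 2*ε) * (2 * Real.pi * ε) ≤ 0 :=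
      mul_nonpos_of_nonpos_of_nonneg (by linarith) (by positivity)
    rw [ENNReal.ofReal_eq_zero.2 h0]
    exact zero_le
  -- main case : ε < 1/4
  set c : EuclideanSpace ℝ (Fin 2) := (WithLp.equiv 2 (Fin 2 → ℝ)).symm ![0, 1 + ε^2] with hc
  set f : ℝ → EuclideanSpace ℝ (Fin 2) :=
    fun θ => (WithLp.equiv 2 (Fin 2 → ℝ)).symm ![ε * Real.cos θ, ε * Real.sin θ] with hf
  have hf0 : ∀ θ, f θ 0 = ε * Real.cos θ := fun θ => rfl
  have hf1 : ∀ θ, f θ 1 = ε * Real.sin θ := fun θ => rfl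
  have hπ := Real.pi_gt_three
  have hfc : Continuous f := by
    apply (PiLp.continuous_toLp 2 (fun _ : Fin 2 => ℝ)).comp
    refine continuous_pi fun i => ?_
    fin_cases i
    · simpa using (by fun_prop : Continuous fun θ => ε * Real.cos θ)
    · simpa using (by fun_prop : Continuous fun θ => ε * Real.sin θ)
  set a : ℝ := 3 * ε with ha
  set k : ℕ := ⌈ε⁻¹⌉₊ with hkdef
  have hk : (ε : ℝ)⁻¹ ≤ (k : ℝ) := Nat.le_ceil _
  have hεinv : (4 : ℝ) < ε⁻¹ := by
    nlinarith [mul_inv_cancel₀ hε.ne', inv_pos.2 hε]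
  have hk4 : (4 : ℝ) < (k : ℝ) := lt_of_lt_of_le hεinv hk
  have hkpos : (0 : ℝ) < (k : ℝ) := by linarith
  set Θ : ℝ := Real.pi - 6 * ε with hΘ
  have hΘpos : 0 < Θ := by rw [hΘ]; linarith
  have hΘπ : Θ ≤ Real.pi := by rw [hΘ]; linarith
  set Δ : ℝ := Θ / k with hΔ
  have hΔpos : 0 < Δ := div_pos hΘpos hkpos
  have hkΔ : (k : ℝ) * Δ = Θ := by rw [hΔ]; field_simp
  -- sin θ ≥ 2ε on [a, a + Θ]
  have hsin_lb : ∀ θ ∈ Icc a (a + Θ), 2 * ε ≤ Real.sin θ := by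
    intro θ ⟨hθ1, hθ2⟩
    have haΘ : a + Θ = Real.pi - 3 * ε := by rw [ha, hΘ]; ring
    rw [haΘ] at hθ2
    have hsin3 : 2 * ε ≤ Real.sin (3 * ε) := by
      nlinarith [Real.sin_gt_sub_cube (show (0:ℝ) < 3 * ε by linarith),
        mul_pos hε hε, mul_pos (mul_pos hε hε) hε]
    rcases le_or_gt θ (Real.pi / 2) with hθ | hθ
    · exact hsin3.trans (Real.sin_le_sin_of_le_of_le_pi_div_two (by linarith) hθ hθ1)
    · rw [← Real.sin_pi_sub]
      exact hsin3.trans (Real.sin_le_sin_of_le_of_le_pi_div_two (by linarith)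
        (by linarith) (by linarith))
  -- membership
  have hmem : ∀ θ ∈ Icc a (a + Θ), f θ ∈ closedBall c 1 ∩ sphere (0 : EuclideanSpace ℝ (Fin 2)) ε := by
    intro θ hθ
    have hs2 := hsin_lb θ hθ
    have hpyth := Real.sin_sq_add_cos_sq θ
    constructor
    · rw [mem_closedBall, EuclideanSpace.dist_eq]
      rw [show (1:ℝ) = Real.sqrt 1 by rw [Real.sqrt_one]]
      apply Real.sqrt_le_sqrt
      rw [Fin.sum_univ_two]
      simp only [hf0, hf1, hc, WithLp.equiv_symm_apply, PiLp.toLp_apply, Matrix.cons_val_zero,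
        Matrix.cons_val_one, Matrix.head_cons, Real.dist_eq]
      rw [sq_abs, sq_abs]
      have hp2 : ε^2 * Real.sin θ^2 + ε^2 * Real.cos θ^2 = ε^2 := by nlinarith [hpyth]
      have hcross : 4*ε^2*(1+ε^2) ≤ 2*ε*(1+ε^2)*Real.sin θ := by
        have h0 : (0:ℝ) ≤ 2*ε*(1+ε^2) := by positivity
        nlinarith [mul_le_mul_of_nonneg_left hs2 h0]
      nlinarith [hp2, hcross, sq_nonneg ε, sq_nonneg (ε^2)]
    · rw [mem_sphere_iff_norm, sub_zero, EuclideanSpace.norm_eq, Fin.sum_univ_two]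
      simp only [hf0, hf1, Real.norm_eq_abs, sq_abs]
      rw [show (ε * Real.cos θ)^2 + (ε * Real.sin θ)^2 = ε^2 by nlinarith]
      exact Real.sqrt_sq hε.le
  -- injectivity
  have hinj : InjOn f (Icc a (a + Θ)) := by
    intro x hx y hy hxy
    have h0 : ε * Real.cos x = ε * Real.cos y := by rw [← hf0, ← hf0, hxy]
    have h1 : ε * Real.sin x = ε * Real.sin y := by rw [← hf1, ← hf1, hxy]
    refine angle_eq_of (mul_left_cancel₀ hε.ne' h0) (mul_left_cancel₀ hε.ne' h1) ?_
    rw [abs_lt]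
    obtain ⟨hx1, hx2⟩ := hx
    obtain ⟨hy1, hy2⟩ := hy
    constructor <;> nlinarith
  -- pieces
  set A : ℕ → Set (EuclideanSpace ℝ (Fin 2)) :=
    fun i => f '' Icc (a + i * Δ) (a + (i + 1) * Δ) with hA
  have hIsub : ∀ i ∈ Finset.range k, Icc (a + i * Δ) (a + (i + 1) * Δ) ⊆ Icc a (a + Θ) := by
    intro i hi
    have hik : (i : ℝ) + 1 ≤ (k : ℝ) := by
      have := Finset.mem_range.1 hi
      exact_mod_cast Nat.succ_le_of_lt this
    apply Icc_subset_Icc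
    · nlinarith [hΔpos.le, Nat.cast_nonneg (α := ℝ) i]
    · nlinarith [hΔpos.le, hkΔ, mul_le_mul_of_nonneg_right hik hΔpos.le]
  have hAsub : ∀ i ∈ Finset.range k, A i ⊆ closedBall c 1 ∩ sphere (0 : EuclideanSpace ℝ (Fin 2)) ε := by
    intro i hi x hx
    obtain ⟨θ, hθ, rfl⟩ := hx
    exact hmem θ (hIsub i hi hθ)
  -- chord lower bound for each piece
  have hchord : ∀ i ∈ Finset.range k,
      ENNReal.ofReal (2 * ε * Real.sin (Δ / 2)) ≤ μH[1] (A i) := by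
    intro i hi
    have hconn : IsPreconnected (A i) := (isPreconnected_Icc).image f hfc.continuousOn
    have hmem1 : f (a + i * Δ) ∈ A i :=
      ⟨a + i * Δ, ⟨le_refl _, by nlinarith [hΔpos.le]⟩, rfl⟩
    have hmem2 : f (a + (i + 1) * Δ) ∈ A i :=
      ⟨a + (i + 1) * Δ, ⟨by nlinarith [hΔpos.le], le_refl _⟩, rfl⟩
    refine le_trans ?_ (chord_le_hausdorff hconn hmem1 hmem2)
    apply ENNReal.ofReal_le_ofReal
    set x₁ : ℝ := a + i * Δ
    set x₂ : ℝ := a + (i + 1) * Δ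
    have hd : x₂ - x₁ = Δ := by ring
    rw [EuclideanSpace.dist_eq, Fin.sum_univ_two]
    simp only [hf0, hf1, Real.dist_eq, sq_abs]
    have hsq : (ε * Real.cos x₁ - ε * Real.cos x₂)^2 + (ε * Real.sin x₁ - ε * Real.sin x₂)^2
        = (2 * ε * Real.sin (Δ / 2))^2 := by
      have hcsub : Real.cos (x₂ - x₁) = Real.cos x₂ * Real.cos x₁ + Real.sin x₂ * Real.sin x₁ :=
        Real.cos_sub x₂ x₁
      have hhalf : Real.sin (Δ / 2) ^ 2 = 1 / 2 - Real.cos Δ / 2 := by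
        have := Real.sin_sq_eq_half_sub (Δ / 2)
        rwa [show 2 * (Δ / 2) = Δ by ring] at this
      rw [hd] at hcsub
      nlinarith [Real.sin_sq_add_cos_sq x₁, Real.sin_sq_add_cos_sq x₂]
    rw [hsq]
    rw [Real.sqrt_sq]
    have hΔπ : Δ ≤ Real.pi := by
      calc Δ = Θ / k := hΔ
        _ ≤ Θ / 1 := by apply div_le_div_of_nonneg_left hΘpos.le one_pos; linarith
        _ ≤ Real.pi := by rw [div_one]; exact hΘπ
    have : 0 ≤ Real.sin (Δ / 2) :=
      Real.sin_nonneg_of_nonneg_of_le_pi (by linarith) (by linarith)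
    positivity
  -- measurability and a.e. disjointness
  haveI : NullSingletonClass (μH[1] : Measure (EuclideanSpace ℝ (Fin 2))) :=
    Measure.noAtoms_hausdorff (EuclideanSpace ℝ (Fin 2)) one_pos
  have hmeas : ∀ i ∈ Finset.range k, NullMeasurableSet (A i) (μH[1]) := fun i _ =>
    ((isCompact_Icc.image hfc).isClosed.measurableSet).nullMeasurableSet
  have hdisj0 : ∀ i j : ℕ, i ∈ Finset.range k → j ∈ Finset.range k → i < j →
      μH[1] (A i ∩ A j) = 0 := by
    intro i j hi hj hij
    have h1 := hIsub i hi
    have h2 := hIsub j hj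
    rw [hA]
    simp only
    rw [← (hinj.mono (union_subset h1 h2)).image_inter subset_union_left subset_union_right]
    apply measure_mono_null (image_mono (inter_subset_inter_left _ (subset_refl _)))
    have hsub : (Icc (a + i * Δ) (a + (i + 1) * Δ) ∩ Icc (a + j * Δ) (a + (j + 1) * Δ)).Subsingleton := by
      intro x hx y hy
      obtain ⟨⟨_, hx2⟩, ⟨hx3, _⟩⟩ := hx
      obtain ⟨⟨_, hy2⟩, ⟨hy3, _⟩⟩ := hy
      have hij' : (i : ℝ) + 1 ≤ (j : ℝ) := by exact_mod_cast Nat.succ_le_of_lt hij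
      nlinarith [hΔpos.le]
    exact ((hsub.image f).measure_zero _)
  have hpair : (Finset.range k : Set ℕ).Pairwise (Function.onFun (AEDisjoint (μH[1])) A) := by
    intro i hi j hj hij
    rcases lt_or_gt_of_ne hij with h | h
    · exact hdisj0 i j (by simpa using hi) (by simpa using hj) h
    · have := hdisj0 j i (by simpa using hj) (by simpa using hi) h
      rwa [Function.onFun, AEDisjoint, inter_comm]
  -- key real inequality
  have hεk : 1 ≤ ε * k := by
    have := mul_le_mul_of_nonneg_left hk hε.le
    rwa [mul_inv_cancel₀ hε.ne'] at this
  have hkey : (1/2 - 2*ε) * (2 * Real.pi * ε) ≤ (k : ℝ) * (2 * ε * Real.sin (Δ / 2)) := by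
    set x : ℝ := Δ / 2 with hx
    have hxk : 2 * (k : ℝ) * x = Θ := by
      rw [hx, hΔ]; field_simp
    have hx0 : 0 < x := by rw [hx]; linarith
    have hxle : x ≤ Real.pi * ε / 2 := by
      nlinarith [mul_pos hkpos hx0, mul_le_mul_of_nonneg_left hεk Real.pi_pos.le]
    have hx1 : x ≤ 1 := by nlinarith [Real.pi_lt_d2]
    have hsin : x - x^3/4 < Real.sin x := by
      nlinarith [Real.sin_gt_sub_cube hx0, pow_pos hx0 3]
    have hkx : (k : ℝ) * x = Θ / 2 := by linarith
    have hxsq : x^2 ≤ (Real.pi * ε / 2)^2 := by nlinarith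
    have hA2 : (k : ℝ) * (2*ε*(x - x^3/4)) = ε*Θ - ε*(Θ/2)*x^2/2 := by
      have h : (k:ℝ) * (2*ε*(x - x^3/4)) = 2*ε*((k:ℝ)*x) - ε*((k:ℝ)*x)*x^2/2 := by ring
      rw [h, hkx]; ring
    have hB : ε*(Θ/2)*x^2/2 ≤ ε*Θ*(Real.pi*ε/2)^2/4 := by
      nlinarith [mul_le_mul_of_nonneg_left hxsq
        (show (0:ℝ) ≤ ε*(Θ/2)/2 by positivity)]
    have hp3 : Real.pi^3 ≤ 3.15^3 :=
      pow_le_pow_left₀ Real.pi_pos.le Real.pi_lt_d2.le 3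
    have hC : ε*Θ*(Real.pi*ε/2)^2/4 ≤ ε^2/2 := by
      have h1 : ε*Θ*(Real.pi*ε/2)^2/4 ≤ ε*Real.pi*(Real.pi*ε/2)^2/4 := by
        nlinarith [sq_nonneg (Real.pi*ε/2), hε.le, hΘπ]
      have h2 : ε*Real.pi*(Real.pi*ε/2)^2/4 = ε^2 * (Real.pi^3 * ε) / 16 := by ring
      have h3 : Real.pi^3 * ε ≤ 8 := by nlinarith [hp3]
      nlinarith [sq_nonneg ε, mul_pos hε hε, h1, h3]
    have hD : (k : ℝ) * (2*ε*(x - x^3/4)) ≥ ε*Θ - ε^2/2 := by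
      rw [hA2]; linarith
    have hE : (k : ℝ) * (2 * ε * Real.sin x) ≥ (k : ℝ) * (2*ε*(x - x^3/4)) := by
      have h0 : (0:ℝ) ≤ (k:ℝ) * (2*ε) := by positivity
      nlinarith [mul_le_mul_of_nonneg_left hsin.le h0]
    have hF : ε*Θ - ε^2/2 ≥ (1/2 - 2*ε) * (2 * Real.pi * ε) := by
      rw [hΘ]
      nlinarith [mul_pos hε hε, Real.pi_gt_three]
    linarith
  -- put it together
  calc ENNReal.ofReal ((1/2 - 2*ε) * (2 * Real.pi * ε))
      ≤ ENNReal.ofReal ((k : ℝ) * (2 * ε * Real.sin (Δ / 2))) :=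
        ENNReal.ofReal_le_ofReal hkey
    _ = ∑ _i ∈ Finset.range k, ENNReal.ofReal (2 * ε * Real.sin (Δ / 2)) := by
        rw [Finset.sum_const, Finset.card_range, nsmul_eq_mul,
          ENNReal.ofReal_mul (by positivity), ENNReal.ofReal_natCast]
    _ ≤ ∑ i ∈ Finset.range k, μH[1] (A i) := Finset.sum_le_sum hchord
    _ = μH[1] (⋃ i ∈ Finset.range k, A i) := (measure_biUnion_finset₀ hpair hmeas).symm
    _ ≤ μH[1] (closedBall c 1 ∩ sphere (0 : EuclideanSpace ℝ (Fin 2)) ε) := by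
        apply measure_mono
        exact iUnion₂_subset hAsub
end

section
/- For every integer d ≥ 2 there exists a constant c_d > 0 (depending only on d) such that for all 0 < ε < 1/2 the following holds: if B ⊆ ℝ^d is the closed Euclidean unit ball centered at (0,…,0,1+ε²) and S ⊆ ℝ^d is the sphere of radius ε centered at the origin, then μ^{d−1}(B ∩ S) ≥ (1/2 − c_d·ε)·μ^{d−1}(S), where μ^{d−1} denotes the (d−1)-dimensional Hausdorff measure on ℝ^d. -/
open MeasureTheory Metric
open scoped RealInnerProductSpace ENNReal NNReal


-- radial projection Lipschitz arithmetic, pure reals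
lemma radial_lip_aux (ε m s t c A B : ℝ) (hε : 0 < ε) (hm : 0 < m) (hs : m ≤ s) (ht : m ≤ t)
    (hc : c ≤ s*t) (hA : 0 ≤ A) (hB : 0 ≤ B)
    (e1 : A^2 = ε^2 - 2*((ε/s)*(ε/t)*c) + ε^2) (e2 : B^2 = s^2+t^2-2*c) :
    A ≤ (ε/m)*B := by
  have hs0 : 0 < s := lt_of_lt_of_le hm hs
  have ht0 : 0 < t := lt_of_lt_of_le hm ht
  have hst : 0 < s*t := mul_pos hs0 ht0
  have hA2 : A^2 * (s*t) = ε^2*(2*(s*t) - 2*c) := by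
    rw [e1]; field_simp; ring
  have hpoly : m^2*(2*(s*t) - 2*c) ≤ (s*t)*(s^2+t^2-2*c) := by
    have h1 : 0 ≤ (s*t - m^2) * (s*t - c) := by
      apply mul_nonneg
      · nlinarith
      · linarith
    nlinarith [mul_nonneg hst.le (sq_nonneg (s - t)), h1]
  have h3 := mul_le_mul_of_nonneg_left hpoly (sq_nonneg ε)
  have h4 : m^2 * (A^2*(s*t)) = m^2 * (ε^2*(2*(s*t)-2*c)) := by rw [hA2]
  have h5 : ε^2*B^2*(s*t) = ε^2*((s*t)*(s^2+t^2-2*c)) := by rw [e2]; ring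
  have h6 : A^2*m^2*(s*t) ≤ ε^2*B^2*(s*t) := by nlinarith [h3, h4, h5]
  have h7 : A^2*m^2 ≤ ε^2*B^2 := le_of_mul_le_mul_right (by linarith) hst
  have h8 : A^2 ≤ ((ε/m)*B)^2 := by
    rw [mul_pow, div_pow, div_mul_eq_mul_div, le_div_iff₀ (by positivity : (0:ℝ) < m^2)]
    linarith
  exact le_of_pow_le_pow_left₀ two_ne_zero (by positivity) h8

-- quadratic solution arithmetic for surjectivity
lemma radial_surj_aux (ε a yk D s : ℝ) (hε : 0 < ε) (ha : 0 < a) (hyk : 0 ≤ yk)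
    (hD2 : D^2 = a^2*yk^2 + ε^2*(ε^2-a^2)) (hsε : s * ε^2 = D - a * yk) :
    a^2 + 2*(a*(s*yk)) + (s*ε)^2 = ε^2 := by
  have hε2 : (0:ℝ) < ε^2 := by positivity
  have key : (a^2 + 2*(a*(s*yk)) + (s*ε)^2) * ε^2 = ε^2 * ε^2 := by
    have expand : (a^2 + 2*(a*(s*yk)) + (s*ε)^2) * ε^2
        = a^2*ε^2 + 2*(a*yk)*(s*ε^2) + (s*ε^2)^2 := by ring
    rw [expand, hsε]
    nlinarith [hD2]
  have := mul_right_cancel₀ (ne_of_gt hε2) key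
  linarith [this]

set_option maxHeartbeats 1000000 in
/-- in `ℝ^d` (`d ≥ 2`) there is a constant `c_d > 0` such that for all
`0 < ε < 1/2`, the unit ball centered at `(0,…,0,1+ε²)` covers at least a
`(1/2 − c_d·ε)` fraction of the `(d−1)`-dimensional Hausdorff measure of the sphere of
radius `ε` centered at the origin. -/
theorem cap_area_lower_bound (d : ℕ) (hd : 2 ≤ d) :
    ∃ c : ℝ, 0 < c ∧ ∀ ε : ℝ, 0 < ε → ε < 1/2 →
      ENNReal.ofReal (1/2 - c * ε) *
          μH[(d : ℝ) - 1] (sphere (0 : EuclideanSpace ℝ (Fin d)) ε) ≤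
        μH[(d : ℝ) - 1]
          (closedBall ((WithLp.equiv 2 (Fin d → ℝ)).symm
              (fun i => if (i : ℕ) = d - 1 then 1 + ε^2 else 0)) 1 ∩
            sphere (0 : EuclideanSpace ℝ (Fin d)) ε) := by
  classical
  have hd2 : (2:ℝ) ≤ (d:ℝ) := by exact_mod_cast hd
  refine ⟨(d:ℝ) - 1, by linarith, ?_⟩
  intro ε hε hε2
  set r : ℝ := (d:ℝ) - 1 with hr
  have hr0 : 0 ≤ r := by rw [hr]; linarith
  set n : ℕ := d - 1 with hn
  have hnr : (n:ℝ) = r := by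
    rw [hn, hr]; push_cast [Nat.cast_sub (by omega : 1 ≤ d)]; ring
  set k : Fin d := ⟨d - 1, by omega⟩ with hk
  set u : EuclideanSpace ℝ (Fin d) := EuclideanSpace.single k (1:ℝ) with hu_def
  have hu : ‖u‖ = 1 := by rw [hu_def, EuclideanSpace.norm_single]; simp
  have hiu : ∀ x : EuclideanSpace ℝ (Fin d), ⟪x, u⟫ = x k := by
    intro x; rw [hu_def, EuclideanSpace.inner_single_right]; simp
  have hiu' : ∀ x : EuclideanSpace ℝ (Fin d), ⟪u, x⟫ = x k := by
    intro x; rw [hu_def, EuclideanSpace.inner_single_left]; simp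
  have huk : u k = 1 := by rw [hu_def]; simp [EuclideanSpace.single_apply]
  set a : ℝ := 2*ε^2 with ha_def
  have ha : 0 < a := by positivity
  have haε : a < ε := by nlinarith
  set m : ℝ := ε - a with hm_def
  have hm : 0 < m := by rw [hm_def]; linarith
  set S : Set (EuclideanSpace ℝ (Fin d)) := sphere 0 ε with hS
  set cap : Set (EuclideanSpace ℝ (Fin d)) := S ∩ {x | a ≤ x k} with hcap
  set Hp : Set (EuclideanSpace ℝ (Fin d)) := S ∩ {x | 0 ≤ x k} with hHp
  set f : EuclideanSpace ℝ (Fin d) → EuclideanSpace ℝ (Fin d) :=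
    fun x => (ε / ‖x - a • u‖) • (x - a • u) with hf
  -- center identification
  have hc : ((WithLp.equiv 2 (Fin d → ℝ)).symm
      (fun i => if (i : ℕ) = d - 1 then 1 + ε^2 else 0)) = (1+ε^2) • u := by
    ext i
    have : ((WithLp.equiv 2 (Fin d → ℝ)).symm
        (fun i => if (i : ℕ) = d - 1 then 1 + ε^2 else 0)) i
        = if (i : ℕ) = d - 1 then 1 + ε^2 else 0 := rfl
    rw [this]
    have h2 : ((1+ε^2) • u) i = (1+ε^2) * (if i = k then 1 else 0) := by
      rw [hu_def]; simp [EuclideanSpace.single_apply]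
    rw [h2]
    have hik : (i = k) ↔ ((i:ℕ) = d - 1) := by
      constructor
      · rintro rfl; rfl
      · intro h; exact Fin.ext h
    by_cases h : (i:ℕ) = d - 1
    · rw [if_pos h, if_pos (hik.mpr h), mul_one]
    · rw [if_neg h, if_neg (fun hh => h (hik.mp hh)), mul_zero]
  -- cap is inside the ball
  have hcapB : cap ⊆ closedBall ((1+ε^2) • u) 1 ∩ S := by
    rintro x ⟨hxS, hxk⟩
    refine ⟨?_, hxS⟩
    rw [hS, mem_sphere_zero_iff_norm] at hxS
    rw [mem_closedBall, dist_eq_norm]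
    have hxk' : a ≤ x k := hxk
    have hsq : ‖x - (1+ε^2) • u‖^2 ≤ 1 := by
      rw [norm_sub_sq_real, real_inner_smul_right, hiu, norm_smul, hu, hxS]
      have h1 : ‖(1+ε^2 : ℝ)‖ = 1+ε^2 := by
        rw [Real.norm_eq_abs, abs_of_pos]; positivity
      rw [h1, mul_one]
      nlinarith [hxk', hε, hε2]
    nlinarith [norm_nonneg (x - (1+ε^2) • u), hsq]
  -- norm lower bound on cap
  have hlb : ∀ x ∈ cap, m ≤ ‖x - a • u‖ := by
    rintro x ⟨hxS, _⟩
    rw [hS, mem_sphere_zero_iff_norm] at hxS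
    have h1 : ‖x‖ - ‖a • u‖ ≤ ‖x - a • u‖ := norm_sub_norm_le x (a • u)
    rw [hxS, norm_smul, hu, mul_one, Real.norm_eq_abs, abs_of_pos ha] at h1
    linarith [h1]
  -- Lipschitz bound for radial projection
  set K : ℝ≥0 := Real.toNNReal (ε / m) with hKdef
  have hKc : (K : ℝ) = ε / m := Real.coe_toNNReal _ (by positivity)
  have hlip : LipschitzOnWith K f cap := by
    apply LipschitzOnWith.of_dist_le_mul
    intro x hx y hy
    rw [hKc, dist_eq_norm, dist_eq_norm]
    have hs : m ≤ ‖x - a • u‖ := hlb x hx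
    have ht : m ≤ ‖y - a • u‖ := hlb y hy
    set z := x - a • u with hz
    set w := y - a • u with hw
    have hs0 : 0 < ‖z‖ := lt_of_lt_of_le hm hs
    have ht0 : 0 < ‖w‖ := lt_of_lt_of_le hm ht
    have hxy : x - y = z - w := by rw [hz, hw]; abel
    have hcc : ⟪z,w⟫ ≤ ‖z‖*‖w‖ := real_inner_le_norm z w
    have e1 : ‖f x - f y‖^2 = ε^2 - 2*((ε/‖z‖)*(ε/‖w‖)*⟪z,w⟫) + ε^2 := by
      have hfd : f x - f y = (ε/‖z‖) • z - (ε/‖w‖) • w := by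
        simp only [hf, hz, hw]
      rw [hfd, norm_sub_sq_real, real_inner_smul_left, real_inner_smul_right,
        norm_smul, norm_smul, Real.norm_eq_abs, Real.norm_eq_abs,
        abs_of_pos (by positivity : (0:ℝ) < ε/‖z‖),
        abs_of_pos (by positivity : (0:ℝ) < ε/‖w‖)]
      field_simp
    have e2 : ‖x - y‖^2 = ‖z‖^2 + ‖w‖^2 - 2*⟪z,w⟫ := by
      rw [hxy, norm_sub_sq_real]; ring
    exact radial_lip_aux ε m (‖z‖) (‖w‖) (⟪z,w⟫) _ _ hε hm hs ht hcc
      (norm_nonneg _) (norm_nonneg _) e1 e2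
  -- hemisphere is covered by image of cap
  have hHsub : Hp ⊆ f '' cap := by
    rintro y ⟨hyS, hyk⟩
    rw [hS, mem_sphere_zero_iff_norm] at hyS
    have hyk' : (0:ℝ) ≤ y k := hyk
    have hεa : 0 ≤ ε^2 - a^2 := by nlinarith [haε, ha]
    set D := Real.sqrt (a^2*(y k)^2 + ε^2*(ε^2 - a^2)) with hD
    have hD2 : D^2 = a^2*(y k)^2 + ε^2*(ε^2-a^2) :=
      Real.sq_sqrt (by nlinarith [hεa, sq_nonneg (a * y k)])
    have hD0 : 0 ≤ D := Real.sqrt_nonneg _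
    have hεa2 : 0 < ε^2 - a^2 := by nlinarith [haε, ha]
    have hDgt : a * y k < D := by
      apply lt_of_pow_lt_pow_left₀ 2 hD0
      nlinarith [mul_pos (mul_pos hε hε) hεa2]
    set s := (D - a * y k)/ε^2 with hs_def
    have hs : 0 < s := by
      apply div_pos (by linarith) (by positivity)
    set x : EuclideanSpace ℝ (Fin d) := a • u + s • y with hx_def
    have hsε : s * ε^2 = D - a * y k := by
      rw [hs_def]; field_simp
    have hxnorm : ‖x‖^2 = ε^2 := by
      rw [hx_def, norm_add_sq_real, real_inner_smul_left, real_inner_smul_right,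
        hiu', norm_smul, norm_smul, hu, hyS, Real.norm_eq_abs, Real.norm_eq_abs,
        abs_of_pos ha, abs_of_pos hs, mul_one]
      exact radial_surj_aux ε a (y k) D s hε ha hyk' hD2 hsε
    have hxS : x ∈ S := by
      rw [hS, mem_sphere_zero_iff_norm]
      have h := congrArg Real.sqrt hxnorm
      rwa [Real.sqrt_sq (norm_nonneg _), Real.sqrt_sq hε.le] at h
    have hxk : a ≤ x k := by
      have : x k = a * u k + s * y k := rfl
      rw [this, huk, mul_one]
      nlinarith [mul_nonneg hs.le hyk']
    refine ⟨x, ⟨hxS, hxk⟩, ?_⟩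
    have hxu : x - a • u = s • y := by rw [hx_def]; abel
    simp only [hf]
    rw [hxu, norm_smul, Real.norm_eq_abs, abs_of_pos hs, hyS, smul_smul]
    have : ε / (s * ε) * s = 1 := by field_simp
    rw [this, one_smul]
  -- reflection symmetry
  have hnegH : μH[r] ((fun x : EuclideanSpace ℝ (Fin d) => -x) '' Hp) = μH[r] Hp :=
    Isometry.hausdorffMeasure_image isometry_neg (Or.inl hr0) _
  have hScover : S ⊆ Hp ∪ ((fun x : EuclideanSpace ℝ (Fin d) => -x) '' Hp) := by
    intro x hxS
    by_cases h : 0 ≤ x k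
    · exact Or.inl ⟨hxS, h⟩
    · refine Or.inr ⟨-x, ⟨?_, ?_⟩, neg_neg x⟩
      · rw [hS, mem_sphere_zero_iff_norm] at hxS ⊢
        rwa [norm_neg]
      · show (0:ℝ) ≤ (-x) k
        have : (-x) k = -(x k) := rfl
        rw [this]; linarith [not_le.mp h]
  -- measure chain
  have h1 : μH[r] S ≤ 2 * μH[r] Hp := by
    calc μH[r] S ≤ μH[r] (Hp ∪ ((fun x : EuclideanSpace ℝ (Fin d) => -x) '' Hp)) :=
          measure_mono hScover
      _ ≤ μH[r] Hp + μH[r] ((fun x : EuclideanSpace ℝ (Fin d) => -x) '' Hp) :=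
          measure_union_le _ _
      _ = 2 * μH[r] Hp := by rw [hnegH, two_mul]
  have h2 : μH[r] Hp ≤ (K : ℝ≥0∞)^r * μH[r] cap :=
    le_trans (measure_mono hHsub) (hlip.hausdorffMeasure_image_le hr0)
  have h5 : μH[r] cap ≤ μH[r] (closedBall ((1+ε^2) • u) 1 ∩ S) := measure_mono hcapB
  -- scalar inequality
  have hb : (0:ℝ) < 1 - 2*ε := by linarith
  have hme : ε/m = 1/(1-2*ε) := by
    rw [hm_def, ha_def]
    rw [div_eq_div_iff (by nlinarith) (by linarith)]
    ring
  have hbern : 1 - 2*(n:ℝ)*ε ≤ (1-2*ε)^n := by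
    have h := one_add_mul_le_pow (show (-2:ℝ) ≤ -(2*ε) by linarith) n
    calc 1 - 2*(n:ℝ)*ε = 1 + (n:ℝ)*(-(2*ε)) := by ring
      _ ≤ (1 + -(2*ε))^n := h
      _ = (1-2*ε)^n := by ring_nf
  have hreal : (1/2 - r*ε) * (2*(ε/m)^n) ≤ 1 := by
    rw [hme, ← hnr]
    have hpow : (0:ℝ) < (1-2*ε)^n := pow_pos hb n
    have hpne : ((1:ℝ)-2*ε)^n ≠ 0 := ne_of_gt hpow
    calc (1/2 - (n:ℝ)*ε) * (2*(1/(1-2*ε))^n) = (1 - 2*(n:ℝ)*ε) / (1-2*ε)^n := by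
          rw [div_pow, one_pow]; field_simp
      _ ≤ 1 := (div_le_one hpow).2 hbern
  have hscalar : ENNReal.ofReal (1/2 - r*ε) * 2 * (K : ℝ≥0∞)^r ≤ 1 := by
    have hKpow : (K : ℝ≥0∞)^r = ENNReal.ofReal ((ε/m)^n) := by
      rw [← hnr, ENNReal.rpow_natCast]
      have : (K : ℝ≥0∞) = ENNReal.ofReal (ε/m) := rfl
      rw [this, ← ENNReal.ofReal_pow (by positivity)]
    rw [hKpow]
    have h2' : (2 : ℝ≥0∞) = ENNReal.ofReal 2 := by
      rw [ENNReal.ofReal_ofNat]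
    rw [h2', mul_assoc, ← ENNReal.ofReal_mul (by norm_num : (0:ℝ) ≤ 2),
      ← ENNReal.ofReal_mul' (by positivity : (0:ℝ) ≤ 2*(ε/m)^n)]
    exact ENNReal.ofReal_le_one.mpr hreal
  -- assemble
  rw [hc]
  calc ENNReal.ofReal (1/2 - r*ε) * μH[r] S
      ≤ ENNReal.ofReal (1/2 - r*ε) * (2 * ((K : ℝ≥0∞)^r * μH[r] cap)) := by
        apply mul_le_mul_right
        exact le_trans h1 (mul_le_mul_right h2 2)
    _ = (ENNReal.ofReal (1/2 - r*ε) * 2 * (K : ℝ≥0∞)^r) * μH[r] cap := by ring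
    _ ≤ 1 * μH[r] cap := mul_le_mul_left hscalar _
    _ = μH[r] cap := one_mul _
    _ ≤ μH[r] (closedBall ((1+ε^2) • u) 1 ∩ S) := h5
end

section
/- Let C = [0,1]² ⊆ ℝ² be the axis-aligned unit square with corners (0,0), (0,1), (1,0), (1,1) and center o = (1/2, 1/2). Let q ∈ ℝ² and suppose the closed Euclidean disk D of radius 1 centered at q contains none of the four corners of C, i.e., ‖q − v‖ > 1 for each corner v. Then D contains no point within distance 1/4 of the center of C: for every p ∈ ℝ² with ‖p − o‖ ≤ 1/4, one has ‖q − p‖ > 1. -/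
open Metric

private lemma aux_sq (x y : ℝ)
    (f1 : 1 < (x + 1/2)^2 + (y + 1/2)^2) (f2 : 1 < (x + 1/2)^2 + (y - 1/2)^2)
    (f3 : 1 < (x - 1/2)^2 + (y + 1/2)^2) (f4 : 1 < (x - 1/2)^2 + (y - 1/2)^2) :
    (5/4 : ℝ)^2 < x^2 + y^2 := by
  have c1 : x^2 + y^2 - x - y > 1/2 := by nlinarith [f4]
  have c2 : x^2 + y^2 - x + y > 1/2 := by nlinarith [f3]
  have c3 : x^2 + y^2 + x - y > 1/2 := by nlinarith [f2]
  have c4 : x^2 + y^2 + x + y > 1/2 := by nlinarith [f1]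
  have hb : x^2 + y^2 - |x| - |y| > 1/2 := by
    rcases abs_cases x with ⟨hx1, _⟩ | ⟨hx1, _⟩ <;>
      rcases abs_cases y with ⟨hy1, _⟩ | ⟨hy1, _⟩ <;>
      rw [hx1, hy1] <;> linarith
  have hr2 : Real.sqrt (x^2 + y^2) ^ 2 = x^2 + y^2 := Real.sq_sqrt (by positivity)
  have hrn : 0 ≤ Real.sqrt (x^2 + y^2) := Real.sqrt_nonneg _
  have hax : Real.sqrt (x^2 + y^2) ≤ |x| + |y| := by
    rw [show |x| + |y| = Real.sqrt ((|x| + |y|)^2) from (Real.sqrt_sq (by positivity)).symm]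
    apply Real.sqrt_le_sqrt
    nlinarith [mul_nonneg (abs_nonneg x) (abs_nonneg y), sq_abs x, sq_abs y]
  have hS : Real.sqrt (x^2 + y^2) ^ 2 > 1/2 + Real.sqrt (x^2 + y^2) := by
    rw [hr2]; linarith
  nlinarith [hS, hrn, hr2]

/-- if a closed unit disk (center `q`) contains none of the four corners of
the unit square `[0,1]²`, then it contains no point within distance `1/4` of the
square's center `(1/2, 1/2)`. -/
theorem disk_missing_corners (q : EuclideanSpace ℝ (Fin 2))
    (h : ∀ v ∈ ({(WithLp.equiv 2 (Fin 2 → ℝ)).symm ![0, 0],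
                 (WithLp.equiv 2 (Fin 2 → ℝ)).symm ![0, 1],
                 (WithLp.equiv 2 (Fin 2 → ℝ)).symm ![1, 0],
                 (WithLp.equiv 2 (Fin 2 → ℝ)).symm ![1, 1]} :
        Set (EuclideanSpace ℝ (Fin 2))), 1 < ‖q - v‖)
    (p : EuclideanSpace ℝ (Fin 2))
    (hp : ‖p - (WithLp.equiv 2 (Fin 2 → ℝ)).symm ![1/2, 1/2]‖ ≤ 1/4) :
    1 < ‖q - p‖ := by
  set o : EuclideanSpace ℝ (Fin 2) := (WithLp.equiv 2 (Fin 2 → ℝ)).symm ![1/2, 1/2] with ho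
  have h1 := h ((WithLp.equiv 2 (Fin 2 → ℝ)).symm ![0, 0]) (by simp)
  have h2 := h ((WithLp.equiv 2 (Fin 2 → ℝ)).symm ![0, 1]) (by simp)
  have h3 := h ((WithLp.equiv 2 (Fin 2 → ℝ)).symm ![1, 0]) (by simp)
  have h4 := h ((WithLp.equiv 2 (Fin 2 → ℝ)).symm ![1, 1]) (by simp)
  have sq1 : ∀ (v : EuclideanSpace ℝ (Fin 2)), 1 < ‖q - v‖ →
      1 < (q 0 - v 0)^2 + (q 1 - v 1)^2 := by
    intro v hv
    have h0 : ‖q - v‖ ^ 2 = (q 0 - v 0)^2 + (q 1 - v 1)^2 := by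
      rw [EuclideanSpace.norm_eq, Real.sq_sqrt (by positivity)]
      simp [Fin.sum_univ_two]
    nlinarith [norm_nonneg (q - v)]
  have e1 := sq1 _ h1
  have e2 := sq1 _ h2
  have e3 := sq1 _ h3
  have e4 := sq1 _ h4
  simp only [WithLp.equiv_symm_apply, PiLp.toLp_apply, Matrix.cons_val_zero, Matrix.cons_val_one,
    Matrix.head_cons] at e1 e2 e3 e4
  have key2 := aux_sq (q 0 - 1/2) (q 1 - 1/2) (by nlinarith [e1]) (by nlinarith [e2])
    (by nlinarith [e3]) (by nlinarith [e4])
  have key : 5/4 < ‖q - o‖ := by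
    have h0 : ‖q - o‖ ^ 2 = (q 0 - 1/2)^2 + (q 1 - 1/2)^2 := by
      rw [EuclideanSpace.norm_eq, Real.sq_sqrt (by positivity)]
      simp [Fin.sum_univ_two, ho]
    nlinarith [norm_nonneg (q - o), key2]
  have tri : ‖q - o‖ - ‖p - o‖ ≤ ‖q - p‖ := by
    have h5 := norm_sub_norm_le (q - o) (p - o)
    have heq : (q - o) - (p - o) = q - p := by abel
    rwa [heq] at h5
  linarith
end

section
/- For all i, j ∈ {0,…,n−1}, the closed interval I_{i,j} = [i, 2n−1−j] satisfies w(I_{i,j}) = A_i + B_j. -/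
/-- The total weight of the constructed points (from sequences `A`, `B` of length `n`)
whose coordinate lies in the closed interval `[a, b]`: for each `i ∈ {0,…,n−1}` there is
a point at `i` with weight `A i`, a guard at `i − 0.5` with weight `−A i`, a point at
`2n−1−i` with weight `B i`, and a guard at `2n−1−i+0.5` with weight `−B i`. -/
noncomputable def intervalWeight (n : ℕ) (A B : Fin n → ℝ) (a b : ℝ) : ℝ :=
  ∑ i : Fin n,
    ((if a ≤ (i : ℝ) ∧ (i : ℝ) ≤ b then A i else 0)
      + (if a ≤ (i : ℝ) - 0.5 ∧ (i : ℝ) - 0.5 ≤ b then -(A i) else 0)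
      + (if a ≤ 2 * n - 1 - (i : ℝ) ∧ 2 * n - 1 - (i : ℝ) ≤ b then B i else 0)
      + (if a ≤ 2 * n - 1 - (i : ℝ) + 0.5 ∧ 2 * n - 1 - (i : ℝ) + 0.5 ≤ b then -(B i) else 0))

lemma combine_ifs (a b : ℕ) (x : ℝ) :
    (if a ≤ b then x else 0) + (if a < b then -x else 0) = if b = a then x else 0 := by
  rcases lt_trichotomy a b with h | h | h
  · simp [h.le, h, h.ne']
  · simp [h]
  · simp [not_le.2 h, not_lt.2 h.le, h.ne]

/-- for all `i, j ∈ {0,…,n−1}`, the closed interval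
`I_{i,j} = [i, 2n−1−j]` covers total weight exactly `A i + B j`. -/
theorem interval_weight_eq (n : ℕ) (hn : 1 ≤ n) (A B : Fin n → ℝ) (i j : Fin n) :
    intervalWeight n A B (i : ℝ) (2 * n - 1 - (j : ℝ)) = A i + B j := by
  unfold intervalWeight
  have key : ∀ k : Fin n,
      ((if (i : ℝ) ≤ (k : ℝ) ∧ (k : ℝ) ≤ 2 * n - 1 - (j : ℝ) then A k else 0)
        + (if (i : ℝ) ≤ (k : ℝ) - 0.5 ∧ (k : ℝ) - 0.5 ≤ 2 * n - 1 - (j : ℝ) then -(A k) else 0)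
        + (if (i : ℝ) ≤ 2 * n - 1 - (k : ℝ) ∧ 2 * n - 1 - (k : ℝ) ≤ 2 * n - 1 - (j : ℝ) then B k else 0)
        + (if (i : ℝ) ≤ 2 * n - 1 - (k : ℝ) + 0.5 ∧ 2 * n - 1 - (k : ℝ) + 0.5 ≤ 2 * n - 1 - (j : ℝ) then -(B k) else 0))
      = (if k = i then A k else 0) + (if k = j then B k else 0) := by
    intro k
    have hk : ((k : ℕ) : ℝ) + 1 ≤ n := by exact_mod_cast k.isLt
    have hi : ((i : ℕ) : ℝ) + 1 ≤ n := by exact_mod_cast i.isLt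
    have hj : ((j : ℕ) : ℝ) + 1 ≤ n := by exact_mod_cast j.isLt
    have h1 : ((i : ℝ) ≤ (k : ℝ) ∧ (k : ℝ) ≤ 2 * n - 1 - (j : ℝ)) ↔ (i : ℕ) ≤ (k : ℕ) := by
      constructor
      · intro h; exact_mod_cast h.1
      · intro h
        have : ((i : ℕ) : ℝ) ≤ (k : ℕ) := by exact_mod_cast h
        exact ⟨this, by linarith⟩
    have h2 : ((i : ℝ) ≤ (k : ℝ) - 0.5 ∧ (k : ℝ) - 0.5 ≤ 2 * n - 1 - (j : ℝ)) ↔ (i : ℕ) < (k : ℕ) := by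
      constructor
      · intro h
        have h' : ((i : ℕ) : ℝ) < ((k : ℕ) : ℝ) := by
          have := h.1; norm_num at this; linarith
        exact_mod_cast h'
      · intro h
        have : ((i : ℕ) : ℝ) + 1 ≤ (k : ℕ) := by exact_mod_cast h
        constructor <;> norm_num <;> linarith
    have h3 : ((i : ℝ) ≤ 2 * n - 1 - (k : ℝ) ∧ 2 * n - 1 - (k : ℝ) ≤ 2 * n - 1 - (j : ℝ)) ↔ (j : ℕ) ≤ (k : ℕ) := by
      constructor
      · intro h
        have : ((j : ℕ) : ℝ) ≤ (k : ℕ) := by linarith [h.2]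
        exact_mod_cast this
      · intro h
        have : ((j : ℕ) : ℝ) ≤ (k : ℕ) := by exact_mod_cast h
        constructor <;> linarith
    have h4 : ((i : ℝ) ≤ 2 * n - 1 - (k : ℝ) + 0.5 ∧ 2 * n - 1 - (k : ℝ) + 0.5 ≤ 2 * n - 1 - (j : ℝ)) ↔ (j : ℕ) < (k : ℕ) := by
      constructor
      · intro h
        have h' : ((j : ℕ) : ℝ) < ((k : ℕ) : ℝ) := by
          have := h.2; norm_num at this; linarith
        exact_mod_cast h'
      · intro h
        have : ((j : ℕ) : ℝ) + 1 ≤ (k : ℕ) := by exact_mod_cast h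
        constructor <;> norm_num <;> linarith
    rw [if_congr h1 rfl rfl, if_congr h2 rfl rfl, if_congr h3 rfl rfl, if_congr h4 rfl rfl,
      if_congr (Fin.ext_iff (a := k) (b := i)) rfl rfl,
      if_congr (Fin.ext_iff (a := k) (b := j)) rfl rfl]
    have e1 := combine_ifs (i : ℕ) (k : ℕ) (A k)
    have e2 := combine_ifs (j : ℕ) (k : ℕ) (B k)
    linarith
  rw [Finset.sum_congr rfl (fun k _ => key k), Finset.sum_add_distrib]
  simp [Finset.sum_ite_eq']
end
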